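/- Let p be a prime, τ an infinite cardinal, and G an abelian p-group with |G| = τ. If the p-rank of p^n G is at least τ for every n ∈ ℕ, then G contains a subgroup isomorphic to the direct sum of τ copies of L_p = ⊕_{n∈ℕ} ℤ(p^n). -/

import Mathlib

/-- The subgroup `nG = {n • g : g ∈ G}` of an abelian group `G`. -/
def nsmulRange (n : ℕ) (G : Type) [AddCommGroup G] : AddSubgroup G :=
  (n • AddMonoidHom.id G).range

/-- The `p`-rank of an abelian group: the `𝔽_p`-dimension of the `p`-socle `G[p]`. -/
noncomputable def pRank (p : ℕ) (G : Type) [AddCommGroup G] : Cardinal :=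
  letI := AddSubgroup.torsionBy.zmodModule (A := G) (n := p)
  Module.rank (ZMod p) (AddSubgroup.torsionBy G p)

open DirectSum

section Aux

open Set Submodule

lemma li_of_not_mem_span_Iio {K V ι : Type*} [DivisionRing K] [AddCommGroup V] [Module K V]
    [LinearOrder ι] {y : ι → V} (h : ∀ i, y i ∉ span K (y '' Set.Iio i)) :
    LinearIndependent K y := by
  classical
  rw [linearIndependent_iff']
  intro s g hsum i hi
  by_contra hgi
  set T := s.filter (fun j => g j ≠ 0) with hT
  have hiT : i ∈ T := Finset.mem_filter.2 ⟨hi, hgi⟩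
  have hTne : T.Nonempty := ⟨i, hiT⟩
  set i0 := T.max' hTne with hi0
  have hgi0 : g i0 ≠ 0 := (Finset.mem_filter.1 (T.max'_mem hTne)).2
  apply h i0
  have hsumT : ∑ j ∈ T, g j • y j = 0 := by
    rw [← hsum]
    apply Finset.sum_subset (Finset.filter_subset _ _)
    intro j hj hjT
    have : g j = 0 := by
      by_contra hgj
      exact hjT (Finset.mem_filter.2 ⟨hj, hgj⟩)
    simp [this]
  have hmem : i0 ∈ T := T.max'_mem hTne
  rw [← Finset.add_sum_erase _ _ hmem] at hsumT
  have : y i0 = (g i0)⁻¹ • (- ∑ j ∈ T.erase i0, g j • y j) := by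
    rw [← eq_neg_of_add_eq_zero_left hsumT, inv_smul_smul₀ hgi0]
  rw [this]
  refine Submodule.smul_mem _ _ (Submodule.neg_mem _ (Submodule.sum_mem _ ?_))
  intro j hj
  refine Submodule.smul_mem _ _ (Submodule.subset_span ?_)
  refine ⟨j, ?_, rfl⟩
  have hjne : j ≠ i0 := Finset.ne_of_mem_erase hj
  exact lt_of_le_of_ne (T.le_max' j (Finset.mem_of_mem_erase hj)) hjne

lemma exists_li_family {K V : Type} [DivisionRing K] [AddCommGroup V] [Module K V]
    {τ : Cardinal} (ι : Type) (hι : Cardinal.mk ι ≤ τ) (W : ι → Submodule K V)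
    (hW : ∀ i, τ ≤ Module.rank K (W i)) :
    ∃ y : ι → V, LinearIndependent K y ∧ ∀ i, y i ∈ W i := by
  classical
  have hβ : Cardinal.mk ι ≤ Cardinal.mk τ.ord.ToType := by
    rwa [Cardinal.mk_ord_toType]
  obtain ⟨f⟩ := (Cardinal.le_def _ _).mp hβ
  letI : LinearOrder ι := LinearOrder.lift' f f.injective
  have hlt : ∀ {a b : ι}, a < b ↔ f a < f b := by
    intro a b
    rw [lt_iff_le_not_ge, lt_iff_le_not_ge]
    exact Iff.rfl
  have wf : WellFounded ((· < ·) : ι → ι → Prop) := by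
    have : ∀ a b : ι, a < b → f a < f b := fun a b => hlt.mp
    exact Subrelation.wf (fun {a b} h => this a b h) (InvImage.wf f wellFounded_lt)
  have key : ∀ (i : ι) (v : {j // j < i} → V), ∃ z, z ∈ W i ∧ z ∉ span K (Set.range v) := by
    intro i v
    by_contra hc
    push_neg at hc
    have hle : W i ≤ span K (Set.range v) := fun z hz => hc z hz
    have h1 : τ ≤ Module.rank K (span K (Set.range v)) :=
      le_trans (hW i) (Submodule.rank_mono hle)
    have h2 : Module.rank K (span K (Set.range v)) ≤ Cardinal.mk (Set.range v) :=
      rank_span_le _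
    have h3 : Cardinal.mk (Set.range v) ≤ Cardinal.mk {j // j < i} :=
      Cardinal.mk_range_le
    have h4 : Cardinal.mk {j // j < i} ≤ Cardinal.mk (Set.Iio (f i)) := by
      refine Cardinal.mk_le_of_injective (f := fun j => (⟨f j.1, hlt.mp j.2⟩ : Set.Iio (f i))) ?_
      intro a b hab
      exact Subtype.ext (f.injective (congrArg Subtype.val hab))
    have h5 : Cardinal.mk (Set.Iio (f i)) < τ := Cardinal.mk_Iio_ord_toType _
    exact absurd (h1.trans (h2.trans (h3.trans h4))) (not_le.mpr h5)
  let F : (i : ι) → ((j : ι) → j < i → V) → V :=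
    fun i rec => Classical.choose (key i (fun j => rec j.1 j.2))
  let Y : ι → V := wf.fix F
  have hYeq : ∀ i, Y i = Classical.choose (key i (fun j : {j // j < i} => Y j.1)) := by
    intro i
    exact wf.fix_eq F i
  have hYspec : ∀ i, Y i ∈ W i ∧ Y i ∉ span K (Set.range (fun j : {j // j < i} => Y j.1)) := by
    intro i
    rw [hYeq i]
    exact Classical.choose_spec (key i (fun j : {j // j < i} => Y j.1))
  have hrange : ∀ i, Set.range (fun j : {j // j < i} => Y j.1) = Y '' Set.Iio i := by
    intro i
    ext v
    constructor
    · rintro ⟨⟨j, hj⟩, rfl⟩; exact ⟨j, hj, rfl⟩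
    · rintro ⟨j, hj, rfl⟩; exact ⟨⟨j, hj⟩, rfl⟩
  refine ⟨Y, ?_, fun i => (hYspec i).1⟩
  apply li_of_not_mem_span_Iio
  intro i
  rw [← hrange i]
  exact (hYspec i).2

lemma key_dvd {G : Type} [AddCommGroup G] {p : ℕ} (hp : p.Prime) {σ : Type}
    (k : σ → ℕ) (x : σ → G)
    (y : σ → AddSubgroup.torsionBy G p)
    (hy : ∀ s, (y s : G) = p ^ (k s - 1) • x s)
    (hx : ∀ s, p ^ k s • x s = 0)
    (hli : letI := AddSubgroup.torsionBy.zmodModule (A := G) (n := p)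
      LinearIndependent (ZMod p) y)
    (F : Finset σ) (a : σ → ℤ) (h0 : ∑ s ∈ F, a s • x s = 0) :
    ∀ s ∈ F, ((p : ℤ)) ^ k s ∣ a s := by
  classical
  letI := AddSubgroup.torsionBy.zmodModule (A := G) (n := p)
  by_contra hcon
  push_neg at hcon
  obtain ⟨s₁, hs₁F, hs₁⟩ := hcon
  set B := F.filter (fun s => ¬ (p:ℤ) ^ (k s) ∣ a s) with hB
  have hBne : B.Nonempty := ⟨s₁, Finset.mem_filter.2 ⟨hs₁F, hs₁⟩⟩
  have hBsub : B ⊆ F := Finset.filter_subset _ _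
  set t : σ → ℕ := fun s => (a s).natAbs.factorization p with ht
  set u : σ → ℤ := fun s => a s / (p:ℤ) ^ (t s) with hudef
  have hane : ∀ s ∈ B, a s ≠ 0 := by
    intro s hs hzero
    exact (Finset.mem_filter.1 hs).2 (hzero ▸ dvd_zero _)
  have hpk : ∀ s ∈ B, ¬ (p:ℤ) ^ (k s) ∣ a s := fun s hs => (Finset.mem_filter.1 hs).2
  have ht1 : ∀ s ∈ B, (p:ℤ) ^ (t s) ∣ a s := by
    intro s hs
    rw [show ((p:ℤ) ^ (t s)) = ((p ^ (t s) : ℕ) : ℤ) by push_cast; ring]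
    exact Int.natCast_dvd.mpr (Nat.ordProj_dvd _ _)
  have ht2 : ∀ s ∈ B, ¬ (p:ℤ) ^ (t s + 1) ∣ a s := by
    intro s hs hdvd
    rw [show ((p:ℤ) ^ (t s + 1)) = ((p ^ (t s + 1) : ℕ) : ℤ) by push_cast; ring,
      Int.natCast_dvd] at hdvd
    exact Nat.pow_succ_factorization_not_dvd (Int.natAbs_ne_zero.2 (hane s hs)) hp hdvd
  have ht3 : ∀ s ∈ B, t s < k s := by
    intro s hs
    by_contra hle
    push_neg at hle
    exact hpk s hs ((pow_dvd_pow _ hle).trans (ht1 s hs))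
  have hu : ∀ s ∈ B, (p:ℤ) ^ (t s) * u s = a s := fun s hs => Int.mul_ediv_cancel' (ht1 s hs)
  have hpu : ∀ s ∈ B, ¬ (p:ℤ) ∣ u s := by
    intro s hs hdvd
    obtain ⟨c, hc⟩ := hdvd
    apply ht2 s hs
    rw [← hu s hs, hc, pow_succ]
    ring_nf
    exact Dvd.intro c rfl
  set e : ℕ := (B.image (fun s => k s - t s)).max' (hBne.image _) with he
  obtain ⟨s₂, hs₂B, hs₂e⟩ : ∃ s ∈ B, k s - t s = e := by
    have := (B.image (fun s => k s - t s)).max'_mem (hBne.image _)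
    rw [Finset.mem_image] at this
    exact this
  have he1 : 1 ≤ e := by
    have := ht3 s₂ hs₂B
    omega
  have hle_e : ∀ s ∈ B, k s - t s ≤ e := by
    intro s hs
    exact Finset.le_max' (B.image (fun s => k s - t s)) (k s - t s)
      (Finset.mem_image_of_mem _ hs)
  set B' := B.filter (fun s => k s - t s = e) with hB'
  have hs₂B' : s₂ ∈ B' := Finset.mem_filter.2 ⟨hs₂B, hs₂e⟩
  have h1 : ∑ s ∈ F, ((p:ℤ) ^ (e-1) * a s) • x s = 0 := by
    have : ∑ s ∈ F, ((p:ℤ) ^ (e-1) * a s) • x s = (p:ℤ) ^ (e-1) • ∑ s ∈ F, a s • x s := by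
      rw [Finset.smul_sum]
      exact Finset.sum_congr rfl (fun s _ => mul_smul _ _ _)
    rw [this, h0, smul_zero]
  have hzpow : ∀ s : σ, (p:ℤ) ^ (k s) • x s = 0 := by
    intro s
    rw [show ((p:ℤ) ^ (k s)) = ((p ^ (k s) : ℕ) : ℤ) by push_cast; ring, natCast_zsmul]
    exact hx s
  have h2 : ∀ s ∈ F, s ∉ B' → ((p:ℤ) ^ (e-1) * a s) • x s = 0 := by
    intro s hsF hsB'
    by_cases hsB : s ∈ B
    · have hne : k s - t s ≠ e := fun h => hsB' (Finset.mem_filter.2 ⟨hsB, h⟩)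
      have hlt : k s - t s < e := lt_of_le_of_ne (hle_e s hsB) hne
      have hks : k s ≤ e - 1 + t s := by
        have := ht3 s hsB
        omega
      have : (p:ℤ) ^ (e-1) * a s
          = ((p:ℤ) ^ (e - 1 + t s - k s) * u s) * (p:ℤ) ^ (k s) := by
        rw [← hu s hsB]
        rw [show (p:ℤ) ^ (e - 1 + t s - k s) * u s * (p:ℤ) ^ (k s)
          = (p:ℤ) ^ (e - 1 + t s - k s) * (p:ℤ) ^ (k s) * u s by ring, ← pow_add]
        rw [Nat.sub_add_cancel hks]
        rw [pow_add]
        ring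
      rw [this, mul_smul, hzpow, smul_zero]
    · have hdvd : (p:ℤ) ^ (k s) ∣ a s := by
        by_contra hnd
        exact hsB (Finset.mem_filter.2 ⟨hsF, hnd⟩)
      obtain ⟨c, hc⟩ := hdvd
      rw [hc, show (p:ℤ) ^ (e-1) * ((p:ℤ) ^ (k s) * c) = ((p:ℤ) ^ (e-1) * c) * (p:ℤ) ^ (k s) by ring,
        mul_smul, hzpow, smul_zero]
  have h3 : ∑ s ∈ B', ((p:ℤ) ^ (e-1) * a s) • x s = 0 := by
    rw [← h1]
    apply Finset.sum_subset (Finset.Subset.trans (Finset.filter_subset _ _) hBsub)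
    intro s hsF hsB'
    exact h2 s hsF hsB'
  have h4 : ∀ s ∈ B', ((p:ℤ) ^ (e-1) * a s) • x s = u s • (y s : G) := by
    intro s hsB'
    obtain ⟨hsB, hse⟩ := Finset.mem_filter.1 hsB'
    have hexp : e - 1 + t s = k s - 1 := by
      have := ht3 s hsB
      omega
    have : (p:ℤ) ^ (e-1) * a s = u s * (p:ℤ) ^ (k s - 1) := by
      rw [← hu s hsB, ← mul_assoc, ← pow_add, hexp]
      ring
    rw [this, mul_smul, hy s]
    congr 1
    rw [show ((p:ℤ) ^ (k s - 1)) = ((p ^ (k s - 1) : ℕ) : ℤ) by push_cast; ring, natCast_zsmul]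
  have h5 : ∑ s ∈ B', u s • (y s : G) = 0 := by
    rw [← h3]
    exact (Finset.sum_congr rfl h4).symm
  have h6 : ∑ s ∈ B', ((u s : ZMod p)) • y s = 0 := by
    have hcoe : ((∑ s ∈ B', ((u s : ZMod p)) • y s : AddSubgroup.torsionBy G p) : G)
        = ∑ s ∈ B', u s • (y s : G) := by
      rw [AddSubmonoidClass.coe_finset_sum]
      apply Finset.sum_congr rfl
      intro s _
      rw [Int.cast_smul_eq_zsmul]
      exact AddSubgroup.coe_zsmul _ _ _
    have := hcoe.trans h5
    exact Subtype.ext this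
  have h7 := linearIndependent_iff'.mp hli B' (fun s => ((u s : ZMod p))) h6 s₂ hs₂B'
  rw [ZMod.intCast_zmod_eq_zero_iff_dvd] at h7
  exact hpu s₂ hs₂B (by simpa using h7)

end Aux

/-- If `G` is an abelian `p`-group of infinite cardinality `τ` and `r_p(p^n G) ≥ τ` for all
`n`, then `G` contains a subgroup isomorphic to `L_p^(τ)`, where `L_p = ⊕_{n ∈ ℕ} ℤ(p^n)`. -/
theorem exists_subgroup_iso_Lp_powc
    (p : ℕ) (hp : Nat.Prime p) (τ : Cardinal) (hτ : Cardinal.aleph0 ≤ τ)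
    (G : Type) [AddCommGroup G]
    (hpG : ∀ g : G, ∃ n : ℕ, p ^ n • g = 0)
    (hcard : Cardinal.mk G = τ)
    (hrank : ∀ n : ℕ, τ ≤ pRank p ↥(nsmulRange (p ^ n) G)) :
    ∃ H : AddSubgroup G,
      Nonempty (↥H ≃+ (τ.out →₀ ⨁ n : ℕ, ZMod (p ^ (n + 1)))) := by
  classical
  haveI : Fact (Nat.Prime p) := ⟨hp⟩
  letI instV : Module (ZMod p) (AddSubgroup.torsionBy G p) :=
    AddSubgroup.torsionBy.zmodModule
  -- the submodules W n = (p^n G)[p] of the socle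
  let W : ℕ → Submodule (ZMod p) (AddSubgroup.torsionBy G p) := fun n =>
    AddSubgroup.toZModSubmodule p
      ((nsmulRange (p ^ n) G).comap (AddSubgroup.torsionBy G p).subtype)
  have hWmem : ∀ (n : ℕ) (v : AddSubgroup.torsionBy G p),
      v ∈ W n ↔ (v : G) ∈ nsmulRange (p ^ n) G := by
    intro n v
    rw [AddSubgroup.mem_toZModSubmodule, AddSubgroup.mem_comap]
    rfl
  -- rank transfer
  have hWrank : ∀ n : ℕ, τ ≤ Module.rank (ZMod p) (W n) := by
    intro n
    letI instT : Module (ZMod p) (AddSubgroup.torsionBy (↥(nsmulRange (p ^ n) G)) p) :=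
      AddSubgroup.torsionBy.zmodModule
    have h1 : τ ≤ Module.rank (ZMod p)
        (AddSubgroup.torsionBy (↥(nsmulRange (p ^ n) G)) p) := hrank n
    refine le_trans h1 (le_of_eq (LinearEquiv.rank_eq ?_))
    let eAdd : (AddSubgroup.torsionBy (↥(nsmulRange (p ^ n) G)) p) ≃+ ↥(W n) :=
      { toFun := fun z =>
          ⟨⟨((z : ↥(nsmulRange (p ^ n) G)) : G), by
              rw [AddSubgroup.torsionBy.nsmul_iff]
              have hz : p • (z : ↥(nsmulRange (p ^ n) G)) = 0 := by
                exact_mod_cast congrArg Subtype.val (AddSubgroup.torsionBy.nsmul z)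
              exact_mod_cast congrArg Subtype.val hz⟩,
            by
              rw [hWmem]
              exact (z : ↥(nsmulRange (p ^ n) G)).2⟩
        invFun := fun w =>
          ⟨⟨((w : AddSubgroup.torsionBy G p) : G), (hWmem n w).mp w.2⟩, by
            have hw : p • ((w : AddSubgroup.torsionBy G p) : G) = 0 :=
              AddSubgroup.torsionBy.nsmul_iff.mp (w : AddSubgroup.torsionBy G p).2
            rw [AddSubgroup.torsionBy.nsmul_iff]
            apply Subtype.ext
            rw [AddSubgroup.coe_nsmul]
            simpa using hw⟩
        left_inv := fun z => rfl
        right_inv := fun w => rfl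
        map_add' := fun z₁ z₂ => rfl }
    exact { eAdd with map_smul' := fun c z => ZMod.map_smul eAdd.toAddMonoidHom c z }
  -- the index type
  have hσ : Cardinal.mk ((_ : τ.out) × ℕ) ≤ τ := by
    have : Cardinal.mk ((_ : τ.out) × ℕ) = τ := by
      calc Cardinal.mk ((_ : τ.out) × ℕ)
          = Cardinal.sum (fun _ : τ.out => Cardinal.mk ℕ) := Cardinal.mk_sigma _
        _ = Cardinal.mk τ.out * Cardinal.mk ℕ := Cardinal.sum_const' _ _
        _ = τ * Cardinal.aleph0 := by rw [Cardinal.mk_out, Cardinal.mk_nat]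
        _ = τ := Cardinal.mul_aleph0_eq hτ
    exact le_of_eq this
  obtain ⟨y, hli, hmem⟩ := exists_li_family ((_ : τ.out) × ℕ) hσ (fun s => W s.2)
    (fun s => hWrank s.2)
  -- pick the lifts x
  have hmem' : ∀ s : (_ : τ.out) × ℕ, ∃ g : G, p ^ s.2 • g = ((y s : G)) := by
    intro s
    have h := (hWmem s.2 (y s)).mp (hmem s)
    obtain ⟨g, hg⟩ := AddMonoidHom.mem_range.mp h
    refine ⟨g, ?_⟩
    rw [← hg]
    simp
  let x : ((_ : τ.out) × ℕ) → G := fun s => Classical.choose (hmem' s)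
  have hxy : ∀ s, p ^ s.2 • x s = (y s : G) := fun s => Classical.choose_spec (hmem' s)
  have hy' : ∀ s : (_ : τ.out) × ℕ, (y s : G) = p ^ ((s.2 + 1) - 1) • x s := by
    intro s
    rw [Nat.add_sub_cancel, hxy]
  have hpy : ∀ s : (_ : τ.out) × ℕ, p • (y s : G) = 0 := by
    intro s
    have hz : p • (y s) = 0 := AddSubgroup.torsionBy.nsmul _
    exact_mod_cast congrArg Subtype.val hz
  have hx' : ∀ s : (_ : τ.out) × ℕ, p ^ (s.2 + 1) • x s = 0 := by
    intro s
    rw [pow_succ, mul_nsmul, hxy]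
    exact hpy s
  -- the homomorphism
  have hcond : ∀ s : (_ : τ.out) × ℕ,
      (zmultiplesHom G (x s)) ((p ^ (s.2 + 1) : ℕ) : ℤ) = 0 := by
    intro s
    rw [zmultiplesHom_apply, natCast_zsmul]
    exact hx' s
  let comp : ∀ s : (_ : τ.out) × ℕ, ZMod (p ^ (s.2 + 1)) →+ G := fun s =>
    ZMod.lift (p ^ (s.2 + 1)) ⟨zmultiplesHom G (x s), hcond s⟩
  have hcomp : ∀ (s : (_ : τ.out) × ℕ) (c : ZMod (p ^ (s.2 + 1))),
      comp s c = ((c.val : ℤ)) • x s := by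
    intro s c
    haveI : NeZero (p ^ (s.2 + 1)) := ⟨pow_ne_zero _ hp.pos.ne'⟩
    have hc : c = (((c.val : ℤ)) : ZMod (p ^ (s.2 + 1))) := by
      rw [Int.cast_natCast]
      exact (ZMod.natCast_rightInverse c).symm
    conv_lhs => rw [hc]
    rw [show comp s = ZMod.lift (p ^ (s.2 + 1)) ⟨zmultiplesHom G (x s), hcond s⟩ from rfl]
    rw [ZMod.lift_coe, zmultiplesHom_apply]
  let Ψ : (⨁ s : (_ : τ.out) × ℕ, ZMod (p ^ (s.2 + 1))) →+ G := DirectSum.toAddMonoid comp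
  have hinj : Function.Injective Ψ := by
    rw [injective_iff_map_eq_zero]
    intro f hf
    have hsum : ∑ s ∈ f.support, (((f s).val : ℤ)) • x s = 0 := by
      calc ∑ s ∈ f.support, (((f s).val : ℤ)) • x s
          = ∑ s ∈ f.support, Ψ (DirectSum.of _ s (f s)) := by
            apply Finset.sum_congr rfl
            intro s _
            rw [show Ψ (DirectSum.of _ s (f s)) = comp s (f s) from
              DirectSum.toAddMonoid_of comp s (f s), hcomp]
        _ = Ψ (∑ s ∈ f.support, DirectSum.of _ s (f s)) := (map_sum Ψ _ _).symm
        _ = Ψ f := by rw [DirectSum.sum_support_of]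
        _ = 0 := hf
    have hdvd := key_dvd hp (fun s : (_ : τ.out) × ℕ => s.2 + 1) x y hy' hx' hli
      f.support (fun s => (((f s).val : ℤ))) hsum
    have hsupp : f.support = ∅ := by
      rw [Finset.eq_empty_iff_forall_notMem]
      intro s hs
      have h := hdvd s hs
      haveI : NeZero (p ^ (s.2 + 1)) := ⟨pow_ne_zero _ hp.pos.ne'⟩
      rw [show ((p:ℤ) ^ (s.2 + 1)) = ((p ^ (s.2 + 1) : ℕ) : ℤ) by push_cast; ring,
        Int.natCast_dvd_natCast] at h
      have hv0 : (f s).val = 0 := Nat.eq_zero_of_dvd_of_lt h (ZMod.val_lt _)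
      exact (DFinsupp.mem_support_iff.mp hs) ((ZMod.val_eq_zero _).mp hv0)
    exact DFinsupp.support_eq_empty.mp hsupp
  refine ⟨Ψ.range, ⟨?_⟩⟩
  letI := Classical.decEq τ.out
  let e1 : (⨁ s : (_ : τ.out) × ℕ, ZMod (p ^ (s.2 + 1))) ≃+ ↥Ψ.range :=
    AddMonoidHom.ofInjective hinj
  let e2 : (τ.out →₀ ⨁ n : ℕ, ZMod (p ^ (n + 1))) ≃+ ⨁ (_i : τ.out), (⨁ n : ℕ, ZMod (p ^ (n + 1))) :=
    (finsuppLEquivDirectSum ℤ (⨁ n : ℕ, ZMod (p ^ (n + 1))) τ.out).toAddEquiv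
  let e3 : (⨁ s : (_ : τ.out) × ℕ, ZMod (p ^ (s.2 + 1))) ≃+
      ⨁ (_i : τ.out), (⨁ n : ℕ, ZMod (p ^ (n + 1))) :=
    DirectSum.sigmaCurryEquiv (α := fun _ : τ.out => ℕ) (δ := fun _ n => ZMod (p ^ (n + 1)))
  exact (e1.symm.trans e3).trans e2.symm
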